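/- (Multiple-access output factorization and necessity of product structure.) For every (2^{ℓ₁},2^{ℓ₂},n) coordination code for the multiple-access network, the reduced output state on Alice's and Bob's systems factorizes: ρ̂_{A^n B^n} = ρ^{(1)}_{A^n} ⊗ ρ^{(2)}_{B^n}. Consequently, if some rate pair (Q₁, Q₂) is achievable for a state ω_{ABC} in the multiple-access network, then ω_{AB} = ω_A ⊗ ω_B. -/

import Mathlib

/-!
Common definitions for quantum coordination networks:
density operators, purity, trace norm, von Neumann entropy, partial traces,
mutual information, CPTP maps (via the Choi matrix), tensor products and
application of channels to subsystems.
-/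

noncomputable section
open scoped BigOperators ComplexOrder

namespace QCoord

variable {α β γ δ : Type*}

/-- A density operator: positive semidefinite with unit trace. -/
def IsDensity [Fintype α] (ρ : Matrix α α ℂ) : Prop :=
  ρ.PosSemidef ∧ ρ.trace = 1

/-- Outer product |v⟩⟨v| of a vector. -/
def outer [Fintype α] (v : α → ℂ) : Matrix α α ℂ :=
  Matrix.of fun i j => v i * star (v j)

/-- A pure state: a rank-one density operator. -/
def IsPure [Fintype α] (ρ : Matrix α α ℂ) : Prop :=
  IsDensity ρ ∧ ∃ v : α → ℂ, ρ = outer v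

/-- The trace norm ‖M‖₁ = tr √(Mᴴ M). -/
def traceNorm [Fintype α] [DecidableEq α] (M : Matrix α α ℂ) : ℝ :=
  ((Matrix.posSemidef_conjTranspose_mul_self M).1.eigenvectorUnitary.1 *
    Matrix.diagonal (fun i => ((√((Matrix.posSemidef_conjTranspose_mul_self M).1.eigenvalues i) : ℝ) : ℂ)) *
    (star (Matrix.posSemidef_conjTranspose_mul_self M).1.eigenvectorUnitary :
      Matrix α α ℂ)).trace.re

/-- Von Neumann entropy in qubits (base-2), via eigenvalues; junk value 0 for
non-Hermitian inputs. -/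
def entropy [Fintype α] [DecidableEq α] (ρ : Matrix α α ℂ) : ℝ :=
  if h : ρ.IsHermitian then
    -∑ i, (h.eigenvalues i) * Real.logb 2 (h.eigenvalues i)
  else 0

/-- Partial trace over the second (right) factor. -/
def ptrR [Fintype β] (ρ : Matrix (α × β) (α × β) ℂ) : Matrix α α ℂ :=
  Matrix.of fun i j => ∑ k, ρ (i, k) (j, k)

/-- Partial trace over the first (left) factor. -/
def ptrL [Fintype α] (ρ : Matrix (α × β) (α × β) ℂ) : Matrix β β ℂ :=
  Matrix.of fun i j => ∑ k, ρ (k, i) (k, j)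

/-- Quantum mutual information I(α;β)_ρ for a bipartite state. -/
def mutualInfo [Fintype α] [Fintype β] [DecidableEq α] [DecidableEq β]
    (ρ : Matrix (α × β) (α × β) ℂ) : ℝ :=
  entropy (ptrR ρ) + entropy (ptrL ρ) - entropy ρ

/-- Conditional entropy S(α|β)_ρ = S(αβ) - S(β). -/
def condEntropy [Fintype α] [Fintype β] [DecidableEq α] [DecidableEq β]
    (ρ : Matrix (α × β) (α × β) ℂ) : ℝ :=
  entropy ρ - entropy (ptrL ρ)

/-- Choi matrix of a linear map on matrices. -/
def choi [Fintype α] [DecidableEq α]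
    (Φ : Matrix α α ℂ →ₗ[ℂ] Matrix β β ℂ) : Matrix (α × β) (α × β) ℂ :=
  Matrix.of fun p q => Φ (Matrix.single p.1 q.1 1) p.2 q.2

/-- CPTP (quantum channel): completely positive (PSD Choi matrix) and
trace-preserving. -/
def IsCPTP [Fintype α] [DecidableEq α] [Fintype β]
    (Φ : Matrix α α ℂ →ₗ[ℂ] Matrix β β ℂ) : Prop :=
  (choi Φ).PosSemidef ∧ ∀ ρ : Matrix α α ℂ, (Φ ρ).trace = ρ.trace

/-- Tensor (Kronecker) product of two square matrices. -/
def tens (X : Matrix α α ℂ) (Y : Matrix β β ℂ) : Matrix (α × β) (α × β) ℂ :=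
  Matrix.of fun p q => X p.1 q.1 * Y p.2 q.2

/-- Extension Φ ⊗ id of a channel by an identity on a spectator system. -/
def extR (Φ : Matrix α α ℂ →ₗ[ℂ] Matrix β β ℂ)
    (ρ : Matrix (α × γ) (α × γ) ℂ) : Matrix (β × γ) (β × γ) ℂ :=
  Matrix.of fun p q => Φ (Matrix.of fun i j => ρ (i, p.2) (j, q.2)) p.1 q.1

/-- Apply a channel to the subsystem identified by the equivalence `e`. -/
def applyOn {ε' : Type*} (e : δ ≃ α × γ)
    (Φ : Matrix α α ℂ →ₗ[ℂ] Matrix ε' ε' ℂ)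
    (ρ : Matrix δ δ ℂ) : Matrix (ε' × γ) (ε' × γ) ℂ :=
  extR Φ (Matrix.reindex e e ρ)

/-- n-fold tensor power of a square matrix. -/
def tpow [Fintype α] (ρ : Matrix α α ℂ) (n : ℕ) :
    Matrix (Fin n → α) (Fin n → α) ℂ :=
  Matrix.of fun i j => ∏ k, ρ (i k) (j k)

end QCoord

/-! ### The cascade network -/

namespace QCoord

/-- Reordering for Bob's encoding step in the cascade network. -/
def eBob {An M1 TB1 TB2 TC : Type*} :
    (((An × M1) × TB1) × (TB2 × TC)) ≃ ((M1 × TB1 × TB2) × (An × TC)) where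
  toFun x := ((x.1.1.2, x.1.2, x.2.1), (x.1.1.1, x.2.2))
  invFun y := (((y.2.1, y.1.1), y.1.2.1), (y.1.2.2, y.2.2))
  left_inv _ := rfl
  right_inv _ := rfl

/-- Reordering for Charlie's encoding step in the cascade network. -/
def eCharlie {Bn M2 An TC : Type*} :
    ((Bn × M2) × (An × TC)) ≃ ((M2 × TC) × (An × Bn)) where
  toFun x := ((x.1.2, x.2.2), (x.2.1, x.1.1))
  invFun y := ((y.2.2, y.1.1), (y.2.1, y.1.2))
  left_inv _ := rfl
  right_inv _ := rfl

/-- Final reordering to (Aⁿ, Bⁿ, Cⁿ). -/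
def eFin {Cn An Bn : Type*} : (Cn × (An × Bn)) ≃ (An × Bn × Cn) where
  toFun x := (x.2.1, x.2.2, x.1)
  invFun y := (y.2.2, (y.1, y.2.1))
  left_inv _ := rfl
  right_inv _ := rfl

variable {A B C R : Type*}

/-- n-fold tensor power of a tripartite state, indexed by
(Fin n → A) × (Fin n → B) × (Fin n → C). -/
def prodPow3 [Fintype A] [Fintype B] [Fintype C]
    (ω : Matrix (A × B × C) (A × B × C) ℂ) (n : ℕ) :
    Matrix ((Fin n → A) × (Fin n → B) × (Fin n → C))
      ((Fin n → A) × (Fin n → B) × (Fin n → C)) ℂ :=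
  Matrix.of fun p q =>
    ∏ k, ω (p.1 k, p.2.1 k, p.2.2 k) (q.1 k, q.2.1 k, q.2.2 k)

/-- n-fold tensor power of a four-partite state. -/
def prodPow4 [Fintype R] [Fintype A] [Fintype B] [Fintype C]
    (ωR : Matrix (R × A × B × C) (R × A × B × C) ℂ) (n : ℕ) :
    Matrix ((Fin n → R) × (Fin n → A) × (Fin n → B) × (Fin n → C))
      ((Fin n → R) × (Fin n → A) × (Fin n → B) × (Fin n → C)) ℂ :=
  Matrix.of fun p q =>
    ∏ k, ωR (p.1 k, p.2.1 k, p.2.2.1 k, p.2.2.2 k)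
      (q.1 k, q.2.1 k, q.2.2.1 k, q.2.2.2 k)

/-- Marginal ω_{BC} of a tripartite state. -/
def mBC [Fintype A] (ω : Matrix (A × B × C) (A × B × C) ℂ) :
    Matrix (B × C) (B × C) ℂ :=
  Matrix.of fun p q => ∑ a, ω (a, p.1, p.2) (a, q.1, q.2)

/-- Marginal ω_C of a tripartite state. -/
def mC [Fintype A] [Fintype B] (ω : Matrix (A × B × C) (A × B × C) ℂ) :
    Matrix C C ℂ :=
  Matrix.of fun c c' => ∑ a, ∑ b, ω (a, b, c) (a, b, c')

/-- Marginal on ((B×C), R) of a purified state ω_{RABC}, arranged for I(BC;R). -/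
def mBC_R [Fintype A] (ωR : Matrix (R × A × B × C) (R × A × B × C) ℂ) :
    Matrix ((B × C) × R) ((B × C) × R) ℂ :=
  Matrix.of fun p q => ∑ a, ωR (p.2, a, p.1.1, p.1.2) (q.2, a, q.1.1, q.1.2)

/-- Marginal on (C, (R×A)) of a purified state ω_{RABC}, arranged for I(C;RA). -/
def mC_RA [Fintype B] (ωR : Matrix (R × A × B × C) (R × A × B × C) ℂ) :
    Matrix (C × (R × A)) (C × (R × A)) ℂ :=
  Matrix.of fun p q => ∑ b, ωR (p.2.1, p.2.2, b, p.1) (q.2.1, q.2.2, b, q.1)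

variable (A B C) in
/-- A (2^ℓ₁, 2^ℓ₂, 2^k₁, 2^k₂, n) coordination code for the cascade network:
pre-shared entangled pure states Ψ (Alice–Bob) and Θ (Bob–Charlie) of Schmidt
ranks 2^{k₁}, 2^{k₂}, and CPTP encoders for Alice, Bob and Charlie with quantum
messages of dimensions 2^{ℓ₁}, 2^{ℓ₂}. -/
structure CascadeCode [Fintype A] [DecidableEq A] [Fintype B] [DecidableEq B]
    [Fintype C] [DecidableEq C] (ℓ₁ ℓ₂ k₁ k₂ n : ℕ) where
  Ψ : Matrix (Fin (2 ^ k₁) × Fin (2 ^ k₁)) (Fin (2 ^ k₁) × Fin (2 ^ k₁)) ℂ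
  Ψ_pure : IsPure Ψ
  Θ : Matrix (Fin (2 ^ k₂) × Fin (2 ^ k₂)) (Fin (2 ^ k₂) × Fin (2 ^ k₂)) ℂ
  Θ_pure : IsPure Θ
  EncA : Matrix (Fin (2 ^ k₁)) (Fin (2 ^ k₁)) ℂ →ₗ[ℂ]
    Matrix ((Fin n → A) × Fin (2 ^ ℓ₁)) ((Fin n → A) × Fin (2 ^ ℓ₁)) ℂ
  EncA_cptp : IsCPTP EncA
  EncB : Matrix (Fin (2 ^ ℓ₁) × Fin (2 ^ k₁) × Fin (2 ^ k₂))
      (Fin (2 ^ ℓ₁) × Fin (2 ^ k₁) × Fin (2 ^ k₂)) ℂ →ₗ[ℂ]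
    Matrix ((Fin n → B) × Fin (2 ^ ℓ₂)) ((Fin n → B) × Fin (2 ^ ℓ₂)) ℂ
  EncB_cptp : IsCPTP EncB
  Dec : Matrix (Fin (2 ^ ℓ₂) × Fin (2 ^ k₂)) (Fin (2 ^ ℓ₂) × Fin (2 ^ k₂)) ℂ →ₗ[ℂ]
    Matrix (Fin n → C) (Fin n → C) ℂ
  Dec_cptp : IsCPTP Dec

/-- Output state ρ̂_{AⁿBⁿCⁿ} of a cascade coordination code: Alice applies her
encoder to her share of Ψ, Bob applies his encoder to (M₁, T_B', T_B''), and
Charlie applies his to (M₂, T_C). -/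
def cascadeOutput [Fintype A] [DecidableEq A] [Fintype B] [DecidableEq B]
    [Fintype C] [DecidableEq C] {ℓ₁ ℓ₂ k₁ k₂ n : ℕ}
    (code : CascadeCode A B C ℓ₁ ℓ₂ k₁ k₂ n) :
    Matrix ((Fin n → A) × (Fin n → B) × (Fin n → C))
      ((Fin n → A) × (Fin n → B) × (Fin n → C)) ℂ :=
  let ρ1 := extR code.EncA code.Ψ
  let ρ2 := applyOn eBob code.EncB (tens ρ1 code.Θ)
  let ρ3 := applyOn eCharlie code.Dec ρ2
  Matrix.reindex eFin eFin ρ3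

/-- Achievability of a rate tuple (Q₁, Q₂, E₁, E₂) for coordination in the
cascade network: for every ε, δ > 0 and all sufficiently large n there is a
(2^{n(Q₁+δ)}, 2^{n(Q₂+δ)}, 2^{n(E₁+δ)}, 2^{n(E₂+δ)}, n) coordination code whose
output is ε-close to ω^{⊗n} in trace norm. -/
def CascadeAchievable [Fintype A] [DecidableEq A] [Fintype B] [DecidableEq B]
    [Fintype C] [DecidableEq C] (ω : Matrix (A × B × C) (A × B × C) ℂ)
    (Q₁ Q₂ E₁ E₂ : ℝ) : Prop :=
  ∀ ε > (0 : ℝ), ∀ δ > (0 : ℝ), ∃ N : ℕ, ∀ n ≥ N,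
    ∃ ℓ₁ ℓ₂ k₁ k₂ : ℕ,
      (ℓ₁ : ℝ) ≤ n * (Q₁ + δ) ∧ (ℓ₂ : ℝ) ≤ n * (Q₂ + δ) ∧
      (k₁ : ℝ) ≤ n * (E₁ + δ) ∧ (k₂ : ℝ) ≤ n * (E₂ + δ) ∧
      ∃ code : CascadeCode A B C ℓ₁ ℓ₂ k₁ k₂ n,
        traceNorm (cascadeOutput code - prodPow3 ω n) ≤ ε

end QCoord

/-! ### The multiple-access network -/

namespace QCoord

variable {A B C C1 C2 : Type*}

/-- Marginal ω_A of a tripartite state. -/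
def mA3 [Fintype B] [Fintype C] (ω : Matrix (A × B × C) (A × B × C) ℂ) :
    Matrix A A ℂ :=
  Matrix.of fun a a' => ∑ b, ∑ c, ω (a, b, c) (a', b, c)

/-- Marginal ω_B of a tripartite state. -/
def mB3 [Fintype A] [Fintype C] (ω : Matrix (A × B × C) (A × B × C) ℂ) :
    Matrix B B ℂ :=
  Matrix.of fun b b' => ∑ a, ∑ c, ω (a, b, c) (a, b', c)

/-- Marginal ω_{AB} of a tripartite state. -/
def mAB3 [Fintype C] (ω : Matrix (A × B × C) (A × B × C) ℂ) :
    Matrix (A × B) (A × B) ℂ :=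
  Matrix.of fun p q => ∑ c, ω (p.1, p.2, c) (q.1, q.2, c)

variable (A B C) in
/-- A (2^ℓ₁, 2^ℓ₂, n) coordination code for the multiple-access network:
CPTP encoders for Alice and Bob and a CPTP decoder for Charlie acting on the
two quantum descriptions. -/
structure MACCode [Fintype A] [DecidableEq A] [Fintype B] [DecidableEq B]
    [Fintype C] [DecidableEq C] (ℓ₁ ℓ₂ n : ℕ) where
  EncA : Matrix (Fin n → A) (Fin n → A) ℂ →ₗ[ℂ]
    Matrix ((Fin n → A) × Fin (2 ^ ℓ₁)) ((Fin n → A) × Fin (2 ^ ℓ₁)) ℂ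
  EncA_cptp : IsCPTP EncA
  EncB : Matrix (Fin n → B) (Fin n → B) ℂ →ₗ[ℂ]
    Matrix ((Fin n → B) × Fin (2 ^ ℓ₂)) ((Fin n → B) × Fin (2 ^ ℓ₂)) ℂ
  EncB_cptp : IsCPTP EncB
  Dec : Matrix (Fin (2 ^ ℓ₁) × Fin (2 ^ ℓ₂)) (Fin (2 ^ ℓ₁) × Fin (2 ^ ℓ₂)) ℂ →ₗ[ℂ]
    Matrix (Fin n → C) (Fin n → C) ℂ
  Dec_cptp : IsCPTP Dec

section mac

variable [Fintype A] [DecidableEq A] [Fintype B] [DecidableEq B]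
  [Fintype C] [DecidableEq C] {ℓ₁ ℓ₂ n : ℕ}

/-- Output state ρ̂_{AⁿBⁿCⁿ} of a multiple-access coordination code:
ρ̂ = (id ⊗ D)(E(ω_A^{⊗n}) ⊗ F(ω_B^{⊗n})). -/
def macOutput (ω : Matrix (A × B × C) (A × B × C) ℂ)
    (code : MACCode A B C ℓ₁ ℓ₂ n) :
    Matrix ((Fin n → A) × (Fin n → B) × (Fin n → C))
      ((Fin n → A) × (Fin n → B) × (Fin n → C)) ℂ :=
  let ρ1 := code.EncA (tpow (mA3 ω) n)
  let ρ2 := code.EncB (tpow (mB3 ω) n)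
  let ρ3 := applyOn
    (⟨fun x => ((x.1.2, x.2.2), (x.1.1, x.2.1)),
      fun y => ((y.2.1, y.1.1), (y.2.2, y.1.2)),
      fun _ => rfl, fun _ => rfl⟩ :
      (((Fin n → A) × Fin (2 ^ ℓ₁)) × ((Fin n → B) × Fin (2 ^ ℓ₂))) ≃
        ((Fin (2 ^ ℓ₁) × Fin (2 ^ ℓ₂)) × ((Fin n → A) × (Fin n → B))))
    code.Dec (tens ρ1 ρ2)
  Matrix.reindex eFin eFin ρ3

/-- The reduced output state of a multiple-access code on (Aⁿ, Bⁿ). -/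
def macOutputAB (ω : Matrix (A × B × C) (A × B × C) ℂ)
    (code : MACCode A B C ℓ₁ ℓ₂ n) :
    Matrix ((Fin n → A) × (Fin n → B)) ((Fin n → A) × (Fin n → B)) ℂ :=
  Matrix.of fun p q => ∑ cn : Fin n → C,
    macOutput ω code (p.1, p.2, cn) (q.1, q.2, cn)

/-- Achievability of a rate pair (Q₁, Q₂) for coordination in the
multiple-access network. -/
def MACAchievable (ω : Matrix (A × B × C) (A × B × C) ℂ) (Q₁ Q₂ : ℝ) : Prop :=
  ∀ ε > (0 : ℝ), ∀ δ > (0 : ℝ), ∃ N : ℕ, ∀ n ≥ N,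
    ∃ ℓ₁ ℓ₂ : ℕ, (ℓ₁ : ℝ) ≤ n * (Q₁ + δ) ∧ (ℓ₂ : ℝ) ≤ n * (Q₂ + δ) ∧
      ∃ code : MACCode A B C ℓ₁ ℓ₂ n,
        traceNorm (macOutput ω code - prodPow3 ω n) ≤ ε

end mac

/-- Marginal state on C₁ of the purification |φ_{AC₁}⟩. -/
def margC1 [Fintype A] (φ : A × C1 → ℂ) : Matrix C1 C1 ℂ :=
  Matrix.of fun c c' => ∑ a, φ (a, c) * star (φ (a, c'))

/-- Marginal state on C₂ of the purification |χ_{BC₂}⟩. -/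
def margC2 [Fintype B] (χ : B × C2 → ℂ) : Matrix C2 C2 ℂ :=
  Matrix.of fun c c' => ∑ b, χ (b, c) * star (χ (b, c'))

end QCoord

namespace QCoord


section aux
variable {A B C : Type} [Fintype A] [DecidableEq A] [Fintype B] [DecidableEq B]
  [Fintype C] [DecidableEq C]

lemma macOutputAB_factor (ω : Matrix (A × B × C) (A × B × C) ℂ)
    {ℓ₁ ℓ₂ n : ℕ} (code : MACCode A B C ℓ₁ ℓ₂ n) :
    macOutputAB ω code =
      tens (ptrR (code.EncA (tpow (mA3 ω) n)))
        (ptrR (code.EncB (tpow (mB3 ω) n))) := by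
  funext p q
  obtain ⟨p1, p2⟩ := p
  obtain ⟨q1, q2⟩ := q
  have h1 : ∀ cn : Fin n → C, macOutput ω code (p1, p2, cn) (q1, q2, cn)
      = code.Dec (Matrix.of fun i j =>
          (code.EncA (tpow (mA3 ω) n)) (p1, i.1) (q1, j.1) *
          (code.EncB (tpow (mB3 ω) n)) (p2, i.2) (q2, j.2)) cn cn := by
    intro cn
    simp only [macOutput, applyOn, extR, tens, Matrix.reindex_apply,
      Matrix.submatrix_apply, Matrix.of_apply, eFin]
    rfl
  have htr := code.Dec_cptp.2 (Matrix.of fun i j =>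
      (code.EncA (tpow (mA3 ω) n)) (p1, i.1) (q1, j.1) *
      (code.EncB (tpow (mB3 ω) n)) (p2, i.2) (q2, j.2))
  simp only [macOutputAB, Matrix.of_apply, h1]
  have : ∑ cn : Fin n → C, code.Dec (Matrix.of fun i j =>
      (code.EncA (tpow (mA3 ω) n)) (p1, i.1) (q1, j.1) *
      (code.EncB (tpow (mB3 ω) n)) (p2, i.2) (q2, j.2)) cn cn
      = (code.Dec (Matrix.of fun i j =>
      (code.EncA (tpow (mA3 ω) n)) (p1, i.1) (q1, j.1) *
      (code.EncB (tpow (mB3 ω) n)) (p2, i.2) (q2, j.2))).trace := rfl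
  rw [this, htr]
  rw [Matrix.trace]
  simp only [Matrix.diag, Matrix.of_apply, Fintype.sum_prod_type]
  rw [tens, Matrix.of_apply, ptrR, ptrR, Matrix.of_apply, Matrix.of_apply,
    Finset.sum_mul_sum]

end aux


section keylemma
open Complex MatrixOrder in
lemma key_bound {d ι : Type*} [Fintype d] [DecidableEq d] [Fintype ι]
    {M : Matrix d d ℂ} (hM : M.IsHermitian) (f g : ι → d)
    (hf : Function.Injective f) (hg : Function.Injective g) :
    ‖∑ i, M (f i) (g i)‖ ≤ traceNorm M := by
  classical
  set U : Matrix d d ℂ := (hM.eigenvectorUnitary : Matrix d d ℂ) with hU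
  set lam := hM.eigenvalues with hlam
  have hUU : star U * U = 1 := Matrix.UnitaryGroup.star_mul_self _
  have hspec : M = U * Matrix.diagonal (RCLike.ofReal ∘ lam) * star U :=
    hM.spectral_theorem
  -- trace norm equals sum of |eigenvalues|
  set S0 : Matrix d d ℂ := U * Matrix.diagonal (fun k => ((|lam k| : ℝ) : ℂ)) * star U with hS0
  have hS0psd : S0.PosSemidef := by
    apply Matrix.PosSemidef.mul_mul_conjTranspose_same (B := U)
    · refine Matrix.posSemidef_diagonal_iff.mpr fun i => ?_
      rw [Complex.zero_le_real]
      exact abs_nonneg _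
  have collapse : ∀ a b : d → ℂ,
      U * Matrix.diagonal a * star U * (U * Matrix.diagonal b * star U)
        = U * (Matrix.diagonal (fun k => a k * b k) * star U) := by
    intro a b
    simp only [Matrix.mul_assoc]
    rw [← Matrix.mul_assoc (star U) U, hUU, Matrix.one_mul,
      ← Matrix.mul_assoc (Matrix.diagonal a), Matrix.diagonal_mul_diagonal]
  have hS0sq : S0 ^ 2 = M.conjTranspose * M := by
    rw [hM.eq, pow_two, hS0]
    conv_rhs => rw [hspec]
    rw [collapse, collapse]
    have hdk : (fun k => ((|lam k| : ℝ) : ℂ) * ((|lam k| : ℝ) : ℂ))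
        = fun k => (RCLike.ofReal ∘ lam) k * (RCLike.ofReal ∘ lam) k := by
      funext k
      show ((|lam k| : ℝ) : ℂ) * ((|lam k| : ℝ) : ℂ)
          = ((lam k : ℝ) : ℂ) * ((lam k : ℝ) : ℂ)
      rw [← Complex.ofReal_mul, ← Complex.ofReal_mul, abs_mul_abs_self]
    rw [hdk]
  have hsqrt : S0 = (Matrix.posSemidef_conjTranspose_mul_self M).1.eigenvectorUnitary.1 *
      Matrix.diagonal (fun i => ((√((Matrix.posSemidef_conjTranspose_mul_self M).1.eigenvalues i) : ℝ) : ℂ)) *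
      (star (Matrix.posSemidef_conjTranspose_mul_self M).1.eigenvectorUnitary : Matrix d d ℂ) := by
    have h1 : CFC.sqrt (M.conjTranspose * M) = S0 :=
      CFC.sqrt_unique (by rw [← hS0sq, pow_two]) hS0psd.nonneg
    rw [← h1, CFC.sqrt_eq_real_sqrt _ (Matrix.posSemidef_conjTranspose_mul_self M).nonneg, cfcₙ_eq_cfc (hf0 := Real.sqrt_zero),
      Matrix.IsHermitian.cfc_eq (Matrix.posSemidef_conjTranspose_mul_self M).1 Real.sqrt,
      Matrix.IsHermitian.cfc, Unitary.conjStarAlgAut_apply]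
    rfl
  have htnS : traceNorm M = S0.trace.re := by rw [hsqrt]; rfl
  have htn : traceNorm M = ∑ k, |lam k| := by
    rw [htnS, hS0, Matrix.trace_mul_comm, ← Matrix.mul_assoc, hUU,
      Matrix.one_mul, Matrix.trace_diagonal]
    rw [← Complex.ofReal_sum]
    exact Complex.ofReal_re _
  -- entrywise spectral formula
  have hent : ∀ p q, M p q = ∑ k, (lam k : ℂ) * (U p k * (starRingEnd ℂ) (U q k)) := by
    intro p q
    conv_lhs => rw [hspec]
    rw [Matrix.mul_apply]
    refine Finset.sum_congr rfl fun k _ => ?_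
    rw [Matrix.mul_diagonal, Matrix.star_apply]
    show U p k * ((lam k : ℝ) : ℂ) * star (U q k) = ((lam k : ℝ) : ℂ) * (U p k * (starRingEnd ℂ) (U q k))
    rw [Complex.star_def]
    ring
  -- column norms
  have hcol : ∀ k, ∑ p, Complex.normSq (U p k) = 1 := by
    intro k
    have h1 : (star U * U) k k = 1 := by rw [hUU]; simp
    rw [Matrix.mul_apply] at h1
    have h2 : ∀ p, (star U) k p * U p k = (Complex.normSq (U p k) : ℂ) := by
      intro p
      rw [Matrix.star_apply, Complex.star_def, mul_comm]
      exact Complex.mul_conj _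
    rw [Finset.sum_congr rfl fun p _ => h2 p, ← Complex.ofReal_sum] at h1
    exact_mod_cast h1
  have hsub : ∀ (h : ι → d), Function.Injective h → ∀ k,
      ∑ i, Complex.normSq (U (h i) k) ≤ 1 := by
    intro h hh k
    rw [← hcol k]
    calc ∑ i, Complex.normSq (U (h i) k)
        = ∑ p ∈ Finset.univ.image h, Complex.normSq (U p k) := by
          rw [Finset.sum_image (fun a _ b _ hab => hh hab)]
      _ ≤ ∑ p, Complex.normSq (U p k) :=
          Finset.sum_le_sum_of_subset_of_nonneg (Finset.subset_univ _)
            (fun p _ _ => Complex.normSq_nonneg (U p k))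
  -- Cauchy-Schwarz bound on coefficients
  have hc : ∀ k, ‖∑ i, U (f i) k * (starRingEnd ℂ) (U (g i) k)‖ ≤ 1 := by
    intro k
    set v : EuclideanSpace ℂ ι := WithLp.toLp 2 (fun i => U (g i) k) with hv
    set w : EuclideanSpace ℂ ι := WithLp.toLp 2 (fun i => U (f i) k) with hw
    have hvw : (∑ i, U (f i) k * (starRingEnd ℂ) (U (g i) k)) = inner ℂ v w := by
      rw [PiLp.inner_apply]
      exact Finset.sum_congr rfl fun i _ => by rw [RCLike.inner_apply]
    have hnv : ‖v‖ ≤ 1 := by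
      rw [EuclideanSpace.norm_eq]
      refine Real.sqrt_le_one.mpr ?_
      calc ∑ i, ‖v i‖ ^ 2 = ∑ i, Complex.normSq (U (g i) k) := by
            refine Finset.sum_congr rfl fun i _ => ?_
            show ‖U (g i) k‖ ^ 2 = Complex.normSq (U (g i) k)
            rw [Complex.sq_norm]
        _ ≤ 1 := hsub g hg k
    have hnw : ‖w‖ ≤ 1 := by
      rw [EuclideanSpace.norm_eq]
      refine Real.sqrt_le_one.mpr ?_
      calc ∑ i, ‖w i‖ ^ 2 = ∑ i, Complex.normSq (U (f i) k) := by
            refine Finset.sum_congr rfl fun i _ => ?_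
            show ‖U (f i) k‖ ^ 2 = Complex.normSq (U (f i) k)
            rw [Complex.sq_norm]
        _ ≤ 1 := hsub f hf k
    calc ‖∑ i, U (f i) k * (starRingEnd ℂ) (U (g i) k)‖
        = ‖inner ℂ v w‖ := by rw [hvw]
      _ ≤ ‖v‖ * ‖w‖ := norm_inner_le_norm v w
      _ ≤ 1 * 1 := by exact mul_le_mul hnv hnw (norm_nonneg _) zero_le_one
      _ = 1 := by ring
  -- assemble
  have hrearr : (∑ i, M (f i) (g i))
      = ∑ k, (lam k : ℂ) * (∑ i, U (f i) k * (starRingEnd ℂ) (U (g i) k)) := by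
    rw [Finset.sum_congr rfl fun i _ => hent (f i) (g i), Finset.sum_comm]
    exact Finset.sum_congr rfl fun k _ => by rw [Finset.mul_sum]
  rw [hrearr, htn]
  calc ‖∑ k, (lam k : ℂ) * (∑ i, U (f i) k * (starRingEnd ℂ) (U (g i) k))‖
      ≤ ∑ k, ‖(lam k : ℂ) * (∑ i, U (f i) k * (starRingEnd ℂ) (U (g i) k))‖ :=
        norm_sum_le _ _
    _ ≤ ∑ k, |lam k| := by
        refine Finset.sum_le_sum fun k _ => ?_
        rw [norm_mul, Complex.norm_real, Real.norm_eq_abs]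
        calc |lam k| * ‖∑ i, U (f i) k * (starRingEnd ℂ) (U (g i) k)‖
            ≤ |lam k| * 1 := mul_le_mul_of_nonneg_left (hc k) (abs_nonneg _)
          _ = |lam k| := mul_one _

end keylemma


section herm

lemma cptp_star_apply {α β : Type*} [Fintype α] [DecidableEq α] [Fintype β]
    {Φ : Matrix α α ℂ →ₗ[ℂ] Matrix β β ℂ} (hΦ : IsCPTP Φ)
    (X : Matrix α α ℂ) (p q : β) :
    star (Φ X p q) = Φ X.conjTranspose q p := by
  have hC := hΦ.1.isHermitian
  have expand : ∀ (Y : Matrix α α ℂ) (r s : β),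
      Φ Y r s = ∑ i : α, ∑ j : α, Y i j * Φ (Matrix.single i j 1) r s := by
    intro Y r s
    have h : Φ Y = ∑ i : α, ∑ j : α, Y i j • Φ (Matrix.single i j 1) := by
      conv_lhs => rw [Matrix.matrix_eq_sum_single Y]
      rw [map_sum]
      refine Finset.sum_congr rfl fun i _ => ?_
      rw [map_sum]
      refine Finset.sum_congr rfl fun j _ => ?_
      rw [show Matrix.single i j (Y i j) = Y i j • Matrix.single i j 1 by
        rw [Matrix.smul_single, smul_eq_mul, mul_one], map_smul]
    rw [h]
    simp [Matrix.sum_apply]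
  have hswap : ∀ i j : α, star (Φ (Matrix.single i j 1) p q)
      = Φ (Matrix.single j i 1) q p := by
    intro i j
    have h := hC.apply (j, q) (i, p)
    simpa [choi] using h
  rw [expand X p q, expand X.conjTranspose q p, star_sum, Finset.sum_comm]
  refine Finset.sum_congr rfl fun j _ => ?_
  rw [star_sum]
  refine Finset.sum_congr rfl fun i _ => ?_
  rw [star_mul', hswap j i, Matrix.conjTranspose_apply]

lemma cptp_isHermitian {α β : Type*} [Fintype α] [DecidableEq α] [Fintype β]
    {Φ : Matrix α α ℂ →ₗ[ℂ] Matrix β β ℂ} (hΦ : IsCPTP Φ)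
    {X : Matrix α α ℂ} (hX : X.IsHermitian) : (Φ X).IsHermitian := by
  funext q p
  rw [Matrix.conjTranspose_apply, cptp_star_apply hΦ, hX.eq]

lemma isHermitian_tpow {α : Type*} [Fintype α] {ρ : Matrix α α ℂ}
    (hρ : ρ.IsHermitian) (n : ℕ) : (tpow ρ n).IsHermitian := by
  funext i j
  rw [Matrix.conjTranspose_apply]
  show star (tpow ρ n j i) = tpow ρ n i j
  rw [tpow, Matrix.of_apply, Matrix.of_apply, star_prod]
  exact Finset.prod_congr rfl fun k _ => hρ.apply (i k) (j k)

lemma isHermitian_mA3 {A B C : Type*} [Fintype A] [Fintype B] [Fintype C]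
    {ω : Matrix (A × B × C) (A × B × C) ℂ} (hω : ω.IsHermitian) :
    (mA3 ω).IsHermitian := by
  funext a a'
  rw [Matrix.conjTranspose_apply]
  show star (mA3 ω a' a) = mA3 ω a a'
  rw [mA3, Matrix.of_apply, Matrix.of_apply, star_sum]
  refine Finset.sum_congr rfl fun b _ => ?_
  rw [star_sum]
  exact Finset.sum_congr rfl fun c _ => hω.apply _ _

lemma isHermitian_mB3 {A B C : Type*} [Fintype A] [Fintype B] [Fintype C]
    {ω : Matrix (A × B × C) (A × B × C) ℂ} (hω : ω.IsHermitian) :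
    (mB3 ω).IsHermitian := by
  funext b b'
  rw [Matrix.conjTranspose_apply]
  show star (mB3 ω b' b) = mB3 ω b b'
  rw [mB3, Matrix.of_apply, Matrix.of_apply, star_sum]
  refine Finset.sum_congr rfl fun a _ => ?_
  rw [star_sum]
  exact Finset.sum_congr rfl fun c _ => hω.apply _ _

lemma isHermitian_prodPow3 {A B C : Type*} [Fintype A] [Fintype B] [Fintype C]
    {ω : Matrix (A × B × C) (A × B × C) ℂ} (hω : ω.IsHermitian) (n : ℕ) :
    (prodPow3 ω n).IsHermitian := by
  funext i j
  rw [Matrix.conjTranspose_apply]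
  show star (prodPow3 ω n j i) = prodPow3 ω n i j
  rw [prodPow3, Matrix.of_apply, Matrix.of_apply, star_prod]
  exact Finset.prod_congr rfl fun k _ => hω.apply _ _

lemma isHermitian_tens {α β : Type*} {X : Matrix α α ℂ} {Y : Matrix β β ℂ}
    (hX : X.IsHermitian) (hY : Y.IsHermitian) : (tens X Y).IsHermitian := by
  funext p q
  rw [Matrix.conjTranspose_apply]
  show star (tens X Y q p) = tens X Y p q
  rw [tens, Matrix.of_apply, Matrix.of_apply, star_mul']
  rw [hX.apply, hY.apply]

lemma isHermitian_extR {α β γ : Type*} [Fintype α] [DecidableEq α] [Fintype β]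
    {Φ : Matrix α α ℂ →ₗ[ℂ] Matrix β β ℂ} (hΦ : IsCPTP Φ)
    {ρ : Matrix (α × γ) (α × γ) ℂ} (hρ : ρ.IsHermitian) :
    (extR Φ ρ).IsHermitian := by
  funext p q
  rw [Matrix.conjTranspose_apply]
  show star (extR Φ ρ q p) = extR Φ ρ p q
  rw [extR, Matrix.of_apply, Matrix.of_apply, cptp_star_apply hΦ]
  have h : (Matrix.of fun i j => ρ (i, q.2) (j, p.2)).conjTranspose
      = Matrix.of fun i j => ρ (i, p.2) (j, q.2) := by
    funext i j
    rw [Matrix.conjTranspose_apply, Matrix.of_apply, Matrix.of_apply]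
    exact hρ.apply _ _
  rw [h]

lemma isHermitian_reindex {α β : Type*} (e : α ≃ β) {M : Matrix α α ℂ}
    (hM : M.IsHermitian) : (Matrix.reindex e e M).IsHermitian := by
  funext p q
  rw [Matrix.conjTranspose_apply]
  show star (M.submatrix (⇑e.symm) (⇑e.symm) q p) = M.submatrix (⇑e.symm) (⇑e.symm) p q
  rw [Matrix.submatrix_apply, Matrix.submatrix_apply]
  exact hM.apply _ _

lemma isHermitian_macOutput {A B C : Type*} [Fintype A] [DecidableEq A]
    [Fintype B] [DecidableEq B] [Fintype C] [DecidableEq C] {ℓ₁ ℓ₂ n : ℕ}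
    {ω : Matrix (A × B × C) (A × B × C) ℂ} (hω : ω.IsHermitian)
    (code : MACCode A B C ℓ₁ ℓ₂ n) : (macOutput ω code).IsHermitian := by
  have h1 : (code.EncA (tpow (mA3 ω) n)).IsHermitian :=
    cptp_isHermitian code.EncA_cptp (isHermitian_tpow (isHermitian_mA3 hω) n)
  have h2 : (code.EncB (tpow (mB3 ω) n)).IsHermitian :=
    cptp_isHermitian code.EncB_cptp (isHermitian_tpow (isHermitian_mB3 hω) n)
  exact isHermitian_reindex eFin
    (isHermitian_extR code.Dec_cptp
      (isHermitian_reindex _ (isHermitian_tens h1 h2)))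

end herm


section eval
variable {A B C : Type} [Fintype A] [Fintype B] [Fintype C]

/-- Split the first coordinate of the `C`-register. -/
def eZ3 (A B C : Type) (m : ℕ) :
    (C × ((Fin m → A) × (Fin m → B) × (Fin m → C)))
      ≃ ((Fin m → A) × (Fin m → B) × (Fin (m+1) → C)) where
  toFun p := (p.2.1, p.2.2.1, Fin.cons p.1 p.2.2.2)
  invFun w := (w.2.2 0, w.1, w.2.1, Fin.tail w.2.2)
  left_inv p := by simp only [Fin.cons_zero, Fin.tail_cons]
  right_inv w := by simp only [Fin.cons_self_tail]

/-- Split the first coordinate of the `B`-register. -/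
def eY3 (A B C : Type) (m : ℕ) :
    (B × ((Fin m → A) × (Fin m → B) × (Fin (m+1) → C)))
      ≃ ((Fin m → A) × (Fin (m+1) → B) × (Fin (m+1) → C)) where
  toFun p := (p.2.1, Fin.cons p.1 p.2.2.1, p.2.2.2)
  invFun w := (w.2.1 0, w.1, Fin.tail w.2.1, w.2.2)
  left_inv p := by simp only [Fin.cons_zero, Fin.tail_cons]
  right_inv w := by simp only [Fin.cons_self_tail]

/-- Split the first coordinate of the `A`-register. -/
def eX3 (A B C : Type) (m : ℕ) :
    (A × ((Fin m → A) × (Fin m → B) × (Fin (m+1) → C)))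
      ≃ ((Fin (m+1) → A) × (Fin m → B) × (Fin (m+1) → C)) where
  toFun p := (Fin.cons p.1 p.2.1, p.2.2.1, p.2.2.2)
  invFun w := (w.1 0, Fin.tail w.1, w.2.1, w.2.2)
  left_inv p := by simp only [Fin.cons_zero, Fin.tail_cons]
  right_inv w := by simp only [Fin.cons_self_tail]

/-- Zip three tuples into a tuple of triples. -/
def e33 (A B C : Type) (m : ℕ) :
    (Fin m → A × B × C) ≃ ((Fin m → A) × (Fin m → B) × (Fin m → C)) where
  toFun p := (fun k => (p k).1, fun k => (p k).2.1, fun k => (p k).2.2)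
  invFun w := fun k => (w.1 k, w.2.1 k, w.2.2 k)
  left_inv p := rfl
  right_inv w := rfl

lemma trace_tpow {α : Type*} [Fintype α] (ρ : Matrix α α ℂ) (n : ℕ) :
    (tpow ρ n).trace = ρ.trace ^ n := by
  rw [Matrix.trace, Matrix.trace, Fintype.sum_pow]
  rfl

lemma trace_mA3 (ω : Matrix (A × B × C) (A × B × C) ℂ) : (mA3 ω).trace = ω.trace := by
  rw [Matrix.trace, Matrix.trace, Fintype.sum_prod_type]
  refine Finset.sum_congr rfl fun a _ => ?_
  rw [Fintype.sum_prod_type]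
  rfl

lemma trace_mB3 (ω : Matrix (A × B × C) (A × B × C) ℂ) : (mB3 ω).trace = ω.trace := by
  have h1 : ω.trace = ∑ a : A, ∑ b : B, ∑ c : C, ω (a, b, c) (a, b, c) := by
    rw [Matrix.trace, Fintype.sum_prod_type]
    exact Finset.sum_congr rfl fun a _ => by rw [Fintype.sum_prod_type]; rfl
  rw [h1, Matrix.trace]
  have h2 : ∀ b, (mB3 ω).diag b = ∑ a : A, ∑ c : C, ω (a, b, c) (a, b, c) :=
    fun b => rfl
  simp only [h2]
  rw [Finset.sum_comm]

lemma sum_diag_pow (ω : Matrix (A × B × C) (A × B × C) ℂ) (htr : ω.trace = 1) (m : ℕ) :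
    (∑ w : (Fin m → A) × (Fin m → B) × (Fin m → C),
      ∏ k : Fin m, ω (w.1 k, w.2.1 k, w.2.2 k) (w.1 k, w.2.1 k, w.2.2 k)) = 1 := by
  have hone : (∑ t : A × B × C, ω t t) = 1 := by
    have h0 : (∑ t : A × B × C, ω t t) = ω.trace := rfl
    rw [h0, htr]
  rw [← Fintype.sum_equiv (e33 A B C m)
    (fun p => ∏ k : Fin m, ω (p k) (p k))
    (fun w => ∏ k : Fin m, ω (w.1 k, w.2.1 k, w.2.2 k) (w.1 k, w.2.1 k, w.2.2 k))
    (fun p => rfl)]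
  rw [← Fintype.sum_pow (fun t : A × B × C => ω t t) m, hone, one_pow]

/-- Evaluation of the copy-0 (A,B)-marginal functional on the product state. -/
lemma sum_prodPow3_AB (ω : Matrix (A × B × C) (A × B × C) ℂ) (htr : ω.trace = 1)
    (m : ℕ) (a a' : A) (b b' : B) :
    ∑ i : (Fin m → A) × (Fin m → B) × (Fin (m+1) → C),
      prodPow3 ω (m+1) (Fin.cons a i.1, Fin.cons b i.2.1, i.2.2)
        (Fin.cons a' i.1, Fin.cons b' i.2.1, i.2.2)
      = mAB3 ω (a, b) (a', b') := by
  rw [← Fintype.sum_equiv (eZ3 A B C m)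
    (fun p => prodPow3 ω (m+1)
        (Fin.cons a p.2.1, Fin.cons b p.2.2.1, Fin.cons p.1 p.2.2.2)
        (Fin.cons a' p.2.1, Fin.cons b' p.2.2.1, Fin.cons p.1 p.2.2.2))
    (fun i => prodPow3 ω (m+1) (Fin.cons a i.1, Fin.cons b i.2.1, i.2.2)
        (Fin.cons a' i.1, Fin.cons b' i.2.1, i.2.2))
    (fun p => rfl)]
  have hsplit : ∀ (z0 : C) (x : Fin m → A) (y : Fin m → B) (zt : Fin m → C),
      prodPow3 ω (m+1) (Fin.cons a x, Fin.cons b y, Fin.cons z0 zt)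
          (Fin.cons a' x, Fin.cons b' y, Fin.cons z0 zt)
        = ω (a, b, z0) (a', b', z0)
          * ∏ k : Fin m, ω (x k, y k, zt k) (x k, y k, zt k) := by
    intro z0 x y zt
    rw [prodPow3, Matrix.of_apply, Fin.prod_univ_succ]
    simp only [Fin.cons_zero, Fin.cons_succ]
  simp only [hsplit]
  rw [Fintype.sum_prod_type]
  simp only [← Finset.mul_sum]
  rw [Finset.sum_congr rfl fun z0 _ => by rw [sum_diag_pow ω htr m, mul_one]]
  rfl

lemma sum_prodPow3_A (ω : Matrix (A × B × C) (A × B × C) ℂ) (htr : ω.trace = 1)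
    (m : ℕ) (a a' : A) :
    ∑ i : (Fin m → A) × (Fin (m+1) → B) × (Fin (m+1) → C),
      prodPow3 ω (m+1) (Fin.cons a i.1, i.2.1, i.2.2)
        (Fin.cons a' i.1, i.2.1, i.2.2)
      = mA3 ω a a' := by
  rw [← Fintype.sum_equiv (eY3 A B C m)
    (fun p => prodPow3 ω (m+1)
        (Fin.cons a p.2.1, Fin.cons p.1 p.2.2.1, p.2.2.2)
        (Fin.cons a' p.2.1, Fin.cons p.1 p.2.2.1, p.2.2.2))
    (fun i => prodPow3 ω (m+1) (Fin.cons a i.1, i.2.1, i.2.2)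
        (Fin.cons a' i.1, i.2.1, i.2.2))
    (fun p => rfl)]
  rw [Fintype.sum_prod_type]
  simp only [fun b0 : B => sum_prodPow3_AB ω htr m a a' b0 b0]
  rfl

lemma sum_prodPow3_B (ω : Matrix (A × B × C) (A × B × C) ℂ) (htr : ω.trace = 1)
    (m : ℕ) (b b' : B) :
    ∑ i : (Fin (m+1) → A) × (Fin m → B) × (Fin (m+1) → C),
      prodPow3 ω (m+1) (i.1, Fin.cons b i.2.1, i.2.2)
        (i.1, Fin.cons b' i.2.1, i.2.2)
      = mB3 ω b b' := by
  rw [← Fintype.sum_equiv (eX3 A B C m)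
    (fun p => prodPow3 ω (m+1)
        (Fin.cons p.1 p.2.1, Fin.cons b p.2.2.1, p.2.2.2)
        (Fin.cons p.1 p.2.1, Fin.cons b' p.2.2.1, p.2.2.2))
    (fun i => prodPow3 ω (m+1) (i.1, Fin.cons b i.2.1, i.2.2)
        (i.1, Fin.cons b' i.2.1, i.2.2))
    (fun p => rfl)]
  rw [Fintype.sum_prod_type]
  simp only [fun a0 : A => sum_prodPow3_AB ω htr m a0 a0 b b']
  rfl

end eval


section maceval
variable {A B C : Type} [Fintype A] [DecidableEq A] [Fintype B] [DecidableEq B]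
  [Fintype C] [DecidableEq C] {ℓ₁ ℓ₂ : ℕ}

lemma sum_diag_macOutput (ω : Matrix (A × B × C) (A × B × C) ℂ) {n : ℕ}
    (code : MACCode A B C ℓ₁ ℓ₂ n) (u u' : Fin n → A) (v v' : Fin n → B) :
    ∑ z : Fin n → C, macOutput ω code (u, v, z) (u', v', z)
      = ptrR (code.EncA (tpow (mA3 ω) n)) u u'
        * ptrR (code.EncB (tpow (mB3 ω) n)) v v' := by
  have h0 : ∑ z : Fin n → C, macOutput ω code (u, v, z) (u', v', z)
      = macOutputAB ω code (u, v) (u', v') := rfl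
  rw [h0, macOutputAB_factor]
  rfl

lemma trace_ptrR_EncA (ω : Matrix (A × B × C) (A × B × C) ℂ) (hω : IsDensity ω)
    {n : ℕ} (code : MACCode A B C ℓ₁ ℓ₂ n) :
    ∑ u : Fin n → A, ptrR (code.EncA (tpow (mA3 ω) n)) u u = 1 := by
  have h1 : (∑ u : Fin n → A, ptrR (code.EncA (tpow (mA3 ω) n)) u u)
      = (code.EncA (tpow (mA3 ω) n)).trace := by
    rw [Matrix.trace, Fintype.sum_prod_type]
    rfl
  rw [h1, code.EncA_cptp.2, trace_tpow, trace_mA3, hω.2, one_pow]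

lemma trace_ptrR_EncB (ω : Matrix (A × B × C) (A × B × C) ℂ) (hω : IsDensity ω)
    {n : ℕ} (code : MACCode A B C ℓ₁ ℓ₂ n) :
    ∑ v : Fin n → B, ptrR (code.EncB (tpow (mB3 ω) n)) v v = 1 := by
  have h1 : (∑ v : Fin n → B, ptrR (code.EncB (tpow (mB3 ω) n)) v v)
      = (code.EncB (tpow (mB3 ω) n)).trace := by
    rw [Matrix.trace, Fintype.sum_prod_type]
    rfl
  rw [h1, code.EncB_cptp.2, trace_tpow, trace_mB3, hω.2, one_pow]

set_option maxHeartbeats 2000000 in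
lemma sum_macOutput_AB (ω : Matrix (A × B × C) (A × B × C) ℂ) {m : ℕ}
    (code : MACCode A B C ℓ₁ ℓ₂ (m+1)) (a a' : A) (b b' : B) :
    ∑ i : (Fin m → A) × (Fin m → B) × (Fin (m+1) → C),
      macOutput ω code (Fin.cons a i.1, Fin.cons b i.2.1, i.2.2)
        (Fin.cons a' i.1, Fin.cons b' i.2.1, i.2.2)
      = (∑ x : Fin m → A,
          ptrR (code.EncA (tpow (mA3 ω) (m+1))) (Fin.cons a x) (Fin.cons a' x))
        * (∑ y : Fin m → B,
          ptrR (code.EncB (tpow (mB3 ω) (m+1))) (Fin.cons b y) (Fin.cons b' y)) := by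
  rw [Fintype.sum_prod_type]
  have h1 : ∀ x : Fin m → A, ∑ j : (Fin m → B) × (Fin (m+1) → C),
      macOutput ω code (Fin.cons a x, Fin.cons b j.1, j.2)
        (Fin.cons a' x, Fin.cons b' j.1, j.2)
      = ∑ y : Fin m → B,
          ptrR (code.EncA (tpow (mA3 ω) (m+1))) (Fin.cons a x) (Fin.cons a' x)
          * ptrR (code.EncB (tpow (mB3 ω) (m+1))) (Fin.cons b y) (Fin.cons b' y) := by
    intro x
    rw [Fintype.sum_prod_type]
    refine Finset.sum_congr rfl fun y _ => ?_
    exact sum_diag_macOutput ω code (Fin.cons a x) (Fin.cons a' x)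
      (Fin.cons b y) (Fin.cons b' y)
  rw [Finset.sum_congr rfl fun x _ => h1 x]
  rw [Finset.sum_mul_sum]

set_option maxHeartbeats 2000000 in
lemma sum_macOutput_A (ω : Matrix (A × B × C) (A × B × C) ℂ) {m : ℕ}
    (code : MACCode A B C ℓ₁ ℓ₂ (m+1)) (a a' : A) :
    ∑ i : (Fin m → A) × (Fin (m+1) → B) × (Fin (m+1) → C),
      macOutput ω code (Fin.cons a i.1, i.2.1, i.2.2)
        (Fin.cons a' i.1, i.2.1, i.2.2)
      = (∑ x : Fin m → A,
          ptrR (code.EncA (tpow (mA3 ω) (m+1))) (Fin.cons a x) (Fin.cons a' x))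
        * (∑ v : Fin (m+1) → B, ptrR (code.EncB (tpow (mB3 ω) (m+1))) v v) := by
  rw [Fintype.sum_prod_type]
  have h1 : ∀ x : Fin m → A, ∑ j : (Fin (m+1) → B) × (Fin (m+1) → C),
      macOutput ω code (Fin.cons a x, j.1, j.2) (Fin.cons a' x, j.1, j.2)
      = ∑ v : Fin (m+1) → B,
          ptrR (code.EncA (tpow (mA3 ω) (m+1))) (Fin.cons a x) (Fin.cons a' x)
          * ptrR (code.EncB (tpow (mB3 ω) (m+1))) v v := by
    intro x
    rw [Fintype.sum_prod_type]
    refine Finset.sum_congr rfl fun v _ => ?_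
    exact sum_diag_macOutput ω code (Fin.cons a x) (Fin.cons a' x) v v
  rw [Finset.sum_congr rfl fun x _ => h1 x]
  rw [Finset.sum_mul_sum]

set_option maxHeartbeats 2000000 in
lemma sum_macOutput_B (ω : Matrix (A × B × C) (A × B × C) ℂ) {m : ℕ}
    (code : MACCode A B C ℓ₁ ℓ₂ (m+1)) (b b' : B) :
    ∑ i : (Fin (m+1) → A) × (Fin m → B) × (Fin (m+1) → C),
      macOutput ω code (i.1, Fin.cons b i.2.1, i.2.2)
        (i.1, Fin.cons b' i.2.1, i.2.2)
      = (∑ u : Fin (m+1) → A, ptrR (code.EncA (tpow (mA3 ω) (m+1))) u u)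
        * (∑ y : Fin m → B,
          ptrR (code.EncB (tpow (mB3 ω) (m+1))) (Fin.cons b y) (Fin.cons b' y)) := by
  rw [Fintype.sum_prod_type]
  have h1 : ∀ u : Fin (m+1) → A, ∑ j : (Fin m → B) × (Fin (m+1) → C),
      macOutput ω code (u, Fin.cons b j.1, j.2) (u, Fin.cons b' j.1, j.2)
      = ∑ y : Fin m → B,
          ptrR (code.EncA (tpow (mA3 ω) (m+1))) u u
          * ptrR (code.EncB (tpow (mB3 ω) (m+1))) (Fin.cons b y) (Fin.cons b' y) := by
    intro u
    rw [Fintype.sum_prod_type]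
    refine Finset.sum_congr rfl fun y _ => ?_
    exact sum_diag_macOutput ω code u u (Fin.cons b y) (Fin.cons b' y)
  rw [Finset.sum_congr rfl fun u _ => h1 u]
  rw [Finset.sum_mul_sum]

set_option maxHeartbeats 2000000 in
lemma entry_est (ω : Matrix (A × B × C) (A × B × C) ℂ) (hω : IsDensity ω)
    {Q₁ Q₂ : ℝ} (hach : MACAchievable ω Q₁ Q₂)
    (a a' : A) (b b' : B) {ε : ℝ} (hε : 0 < ε) :
    ∃ sA sB : ℂ,
      ‖sA * sB - mAB3 ω (a, b) (a', b')‖ ≤ ε ∧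
      ‖sA - mA3 ω a a'‖ ≤ ε ∧
      ‖sB - mB3 ω b b'‖ ≤ ε := by
  obtain ⟨N, hN⟩ := hach ε hε 1 one_pos
  obtain ⟨ℓ₁', ℓ₂', -, -, code, hcode⟩ := hN (N+1) (Nat.le_succ N)
  have hD : (macOutput ω code - prodPow3 ω (N+1)).IsHermitian :=
    (isHermitian_macOutput hω.1.isHermitian code).sub
      (isHermitian_prodPow3 hω.1.isHermitian (N+1))
  refine ⟨∑ x : Fin N → A,
      ptrR (code.EncA (tpow (mA3 ω) (N+1))) (Fin.cons a x) (Fin.cons a' x),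
    ∑ y : Fin N → B,
      ptrR (code.EncB (tpow (mB3 ω) (N+1))) (Fin.cons b y) (Fin.cons b' y),
    ?_, ?_, ?_⟩
  · have hf : Function.Injective
        (fun i : (Fin N → A) × (Fin N → B) × (Fin (N+1) → C) =>
          ((Fin.cons a i.1, Fin.cons b i.2.1, i.2.2) :
            (Fin (N+1) → A) × (Fin (N+1) → B) × (Fin (N+1) → C))) := by
      rintro ⟨x, y, z⟩ ⟨x', y', z'⟩ h
      simp only [Prod.mk.injEq] at h
      exact Prod.ext (Fin.cons_right_injective _ h.1)
        (Prod.ext (Fin.cons_right_injective _ h.2.1) h.2.2)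
    have hg : Function.Injective
        (fun i : (Fin N → A) × (Fin N → B) × (Fin (N+1) → C) =>
          ((Fin.cons a' i.1, Fin.cons b' i.2.1, i.2.2) :
            (Fin (N+1) → A) × (Fin (N+1) → B) × (Fin (N+1) → C))) := by
      rintro ⟨x, y, z⟩ ⟨x', y', z'⟩ h
      simp only [Prod.mk.injEq] at h
      exact Prod.ext (Fin.cons_right_injective _ h.1)
        (Prod.ext (Fin.cons_right_injective _ h.2.1) h.2.2)
    have hk := key_bound hD _ _ hf hg
    rw [Finset.sum_congr rfl (fun i _ => Matrix.sub_apply _ _ _ _),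
      Finset.sum_sub_distrib, sum_macOutput_AB ω code a a' b b',
      sum_prodPow3_AB ω hω.2 N a a' b b'] at hk
    exact hk.trans hcode
  · have hf : Function.Injective
        (fun i : (Fin N → A) × (Fin (N+1) → B) × (Fin (N+1) → C) =>
          ((Fin.cons a i.1, i.2.1, i.2.2) :
            (Fin (N+1) → A) × (Fin (N+1) → B) × (Fin (N+1) → C))) := by
      rintro ⟨x, y, z⟩ ⟨x', y', z'⟩ h
      simp only [Prod.mk.injEq] at h
      exact Prod.ext (Fin.cons_right_injective _ h.1) (Prod.ext h.2.1 h.2.2)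
    have hg : Function.Injective
        (fun i : (Fin N → A) × (Fin (N+1) → B) × (Fin (N+1) → C) =>
          ((Fin.cons a' i.1, i.2.1, i.2.2) :
            (Fin (N+1) → A) × (Fin (N+1) → B) × (Fin (N+1) → C))) := by
      rintro ⟨x, y, z⟩ ⟨x', y', z'⟩ h
      simp only [Prod.mk.injEq] at h
      exact Prod.ext (Fin.cons_right_injective _ h.1) (Prod.ext h.2.1 h.2.2)
    have hk := key_bound hD _ _ hf hg
    rw [Finset.sum_congr rfl (fun i _ => Matrix.sub_apply _ _ _ _),
      Finset.sum_sub_distrib, sum_macOutput_A ω code a a',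
      sum_prodPow3_A ω hω.2 N a a', trace_ptrR_EncB ω hω code, mul_one] at hk
    exact hk.trans hcode
  · have hf : Function.Injective
        (fun i : (Fin (N+1) → A) × (Fin N → B) × (Fin (N+1) → C) =>
          ((i.1, Fin.cons b i.2.1, i.2.2) :
            (Fin (N+1) → A) × (Fin (N+1) → B) × (Fin (N+1) → C))) := by
      rintro ⟨x, y, z⟩ ⟨x', y', z'⟩ h
      simp only [Prod.mk.injEq] at h
      exact Prod.ext h.1 (Prod.ext (Fin.cons_right_injective _ h.2.1) h.2.2)
    have hg : Function.Injective
        (fun i : (Fin (N+1) → A) × (Fin N → B) × (Fin (N+1) → C) =>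
          ((i.1, Fin.cons b' i.2.1, i.2.2) :
            (Fin (N+1) → A) × (Fin (N+1) → B) × (Fin (N+1) → C))) := by
      rintro ⟨x, y, z⟩ ⟨x', y', z'⟩ h
      simp only [Prod.mk.injEq] at h
      exact Prod.ext h.1 (Prod.ext (Fin.cons_right_injective _ h.2.1) h.2.2)
    have hk := key_bound hD _ _ hf hg
    rw [Finset.sum_congr rfl (fun i _ => Matrix.sub_apply _ _ _ _),
      Finset.sum_sub_distrib, sum_macOutput_B ω code b b',
      sum_prodPow3_B ω hω.2 N b b', trace_ptrR_EncA ω hω code, one_mul] at hk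
    exact hk.trans hcode

end maceval

/-- **Multiple-access output factorization and necessity of product
structure.**  For every multiple-access coordination code the reduced output
on (Aⁿ, Bⁿ) factorizes as ρ⁽¹⁾_{Aⁿ} ⊗ ρ⁽²⁾_{Bⁿ}; consequently, if some rate
pair is achievable for ω_{ABC}, then ω_{AB} = ω_A ⊗ ω_B. -/
theorem mac_output_factorization
    {A B C : Type} [Fintype A] [DecidableEq A] [Fintype B] [DecidableEq B]
    [Fintype C] [DecidableEq C]
    (ω : Matrix (A × B × C) (A × B × C) ℂ) (hω : IsDensity ω) :
    (∀ (ℓ₁ ℓ₂ n : ℕ) (code : MACCode A B C ℓ₁ ℓ₂ n),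
      macOutputAB ω code =
        tens (ptrR (code.EncA (tpow (mA3 ω) n)))
          (ptrR (code.EncB (tpow (mB3 ω) n)))) ∧
    ((∃ Q₁ Q₂ : ℝ, MACAchievable ω Q₁ Q₂) →
      mAB3 ω = tens (mA3 ω) (mB3 ω)) := by
  constructor
  · intro ℓ₁ ℓ₂ n code
    exact macOutputAB_factor ω code
  · rintro ⟨Q₁, Q₂, hach⟩
    funext p q
    obtain ⟨a, b⟩ := p
    obtain ⟨a', b'⟩ := q
    have hrhs : tens (mA3 ω) (mB3 ω) (a, b) (a', b') = mA3 ω a a' * mB3 ω b b' := rfl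
    show mAB3 ω (a, b) (a', b') = tens (mA3 ω) (mB3 ω) (a, b) (a', b')
    rw [hrhs]
    set CA := ‖mA3 ω a a'‖ with hCA
    set CB := ‖mB3 ω b b'‖ with hCB
    have hCA0 : 0 ≤ CA := norm_nonneg _
    have hCB0 : 0 ≤ CB := norm_nonneg _
    set K : ℝ := 2 + CA + CB with hKdef
    have hK : 0 < K := by rw [hKdef]; linarith
    have hmain : ∀ ε : ℝ, 0 < ε → ε ≤ 1 →
        ‖mAB3 ω (a, b) (a', b') - mA3 ω a a' * mB3 ω b b'‖ ≤ ε * K := by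
      intro ε hε hε1
      obtain ⟨sA, sB, h1, h2, h3⟩ := entry_est ω hω hach a a' b b' hε
      have hsA : ‖sA‖ ≤ CA + ε := by
        have hx : sA = mA3 ω a a' + (sA - mA3 ω a a') := by ring
        rw [hx]
        exact (norm_add_le _ _).trans (add_le_add le_rfl h2)
      have hkey : mAB3 ω (a, b) (a', b') - mA3 ω a a' * mB3 ω b b'
          = -(sA * sB - mAB3 ω (a, b) (a', b')) + sA * (sB - mB3 ω b b')
            + (sA - mA3 ω a a') * mB3 ω b b' := by ring
      rw [hkey]
      have t1 : ‖-(sA * sB - mAB3 ω (a, b) (a', b'))‖ ≤ ε := by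
        rw [norm_neg]; exact h1
      have step1 : ‖-(sA * sB - mAB3 ω (a, b) (a', b'))
            + sA * (sB - mB3 ω b b') + (sA - mA3 ω a a') * mB3 ω b b'‖
          ≤ ε + (CA + ε) * ε + ε * CB := by
        refine (norm_add_le _ _).trans ?_
        refine add_le_add ((norm_add_le _ _).trans (add_le_add t1 ?_)) ?_
        · rw [norm_mul]
          exact mul_le_mul hsA h3 (norm_nonneg _) (by linarith)
        · rw [norm_mul]
          exact mul_le_mul_of_nonneg_right h2 hCB0
      refine step1.trans ?_
      rw [hKdef]
      nlinarith [hCA0, hCB0, hε, hε1]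
    by_contra hne
    have hsub : mAB3 ω (a, b) (a', b') - mA3 ω a a' * mB3 ω b b' ≠ 0 :=
      sub_ne_zero.mpr hne
    set t := ‖mAB3 ω (a, b) (a', b') - mA3 ω a a' * mB3 ω b b'‖ with ht
    have htpos : 0 < t := norm_pos_iff.mpr hsub
    have hεpos : (0 : ℝ) < min 1 (t / (2 * K)) :=
      lt_min one_pos (div_pos htpos (by linarith))
    have hb := hmain _ hεpos (min_le_left _ _)
    have hεle : min 1 (t / (2 * K)) ≤ t / (2 * K) := min_le_right _ _
    have hfin : t ≤ (t / (2 * K)) * K :=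
      hb.trans (mul_le_mul_of_nonneg_right hεle (le_of_lt hK))
    have h2K : (t / (2 * K)) * K = t / 2 := by
      field_simp
    rw [h2K] at hfin
    linarith

end QCoord
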